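/- If G is a graph such that wd(G) = d ≥ 3 and wd(G*) < d for every proper subgraph G* of G, then every vertex of G has degree at least d. -/

import Mathlib

open SimpleGraph

universe u

/-- `G` is strictly `f`-degenerate: every nonempty subgraph `R` of `G` contains a vertex `v`
with `d_R(v) < f(v)`. -/
def StrictlyDegenerate {V : Type u} (G : SimpleGraph V) (f : V → ℤ) : Prop :=
  ∀ R : G.Subgraph, R.verts.Nonempty → ∃ v ∈ R.verts, ((R.neighborSet v).ncard : ℤ) < f v

/-- `G` is `k`-degenerate: every nonempty subgraph has a vertex of degree at most `k`. -/
def Degenerate {V : Type u} (G : SimpleGraph V) (k : ℕ) : Prop :=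
  ∀ R : G.Subgraph, R.verts.Nonempty → ∃ v ∈ R.verts, (R.neighborSet v).ncard ≤ k

open Classical in
/-- `WeakReduce G S f` : the graph induced by the set `S` of remaining vertices, together with
the function `f`, can be reduced to the null graph by a sequence of legal `Delete` and
`DeleteSave` operations. -/
inductive WeakReduce {V : Type u} (G : SimpleGraph V) : Set V → (V → ℤ) → Prop
  | nil (f : V → ℤ) : WeakReduce G ∅ f
  | delete (S : Set V) (f : V → ℤ) (u : V) (hu : u ∈ S) (h0 : 0 ≤ f u)
      (hpos : ∀ x ∈ S \ {u}, 0 ≤ f x - (if G.Adj u x then 1 else 0))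
      (ih : WeakReduce G (S \ {u}) (fun x => f x - (if G.Adj u x then 1 else 0))) :
      WeakReduce G S f
  | deleteSave (S : Set V) (f : V → ℤ) (a b : V) (ha : a ∈ S) (hb : b ∈ S)
      (hab : G.Adj a b) (hfab : f b < f a)
      (hpos : ∀ x ∈ S \ {a}, 0 ≤ f x - (if G.Adj a x ∧ x ≠ b then 1 else 0))
      (ih : WeakReduce G (S \ {a}) (fun x => f x - (if G.Adj a x ∧ x ≠ b then 1 else 0))) :
      WeakReduce G S f

/-- `G` is weakly `f`-degenerate. -/
def WeaklyFDegenerate {V : Type u} (G : SimpleGraph V) (f : V → ℤ) : Prop :=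
  WeakReduce G Set.univ f

/-- `G` is weakly `k`-degenerate. -/
def WeaklyDegenerate {V : Type u} (G : SimpleGraph V) (k : ℕ) : Prop :=
  WeaklyFDegenerate G (fun _ => (k : ℤ))

/-- The weak degeneracy `wd(G)`. -/
noncomputable def weakDegeneracy {V : Type u} (G : SimpleGraph V) : ℕ :=
  sInf {k | WeaklyDegenerate G k}

/-- The degeneracy `d(G)`. -/
noncomputable def degeneracy {V : Type u} (G : SimpleGraph V) : ℕ :=
  sInf {k | Degenerate G k}

/-- A combinatorial plane graph: a graph together with a family of faces, each given by a
closed boundary walk, such that every edge lies on boundary walks with total multiplicity two,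
and satisfying Euler's formula when the graph is connected. -/
structure PlaneGraph (V : Type u) [Fintype V] [DecidableEq V] where
  graph : SimpleGraph V
  numFaces : ℕ
  root : Fin numFaces → V
  boundary : (i : Fin numFaces) → graph.Walk (root i) (root i)
  edge_two_faces : ∀ e ∈ graph.edgeSet, (∑ i, ((boundary i).edges.count e)) = 2
  euler : graph.Connected →
    (Fintype.card V : ℤ) - (graph.edgeSet.ncard : ℤ) + (numFaces : ℤ) = 2

/-- The size of a face: the length of its boundary closed walk. -/
def PlaneGraph.faceSize {V : Type u} [Fintype V] [DecidableEq V] (P : PlaneGraph V)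
    (i : Fin P.numFaces) : ℕ :=
  (P.boundary i).length

/-- A graph is planar if it admits a plane embedding. -/
def SimpleGraph.IsPlanarEmb {V : Type u} [Fintype V] [DecidableEq V]
    (G : SimpleGraph V) : Prop :=
  ∃ P : PlaneGraph V, P.graph = G

/-- `G` has no cycle of length `n`. -/
def NoCycleLength {V : Type u} (G : SimpleGraph V) (n : ℕ) : Prop :=
  ∀ (v : V) (c : G.Walk v v), c.IsCycle → c.length ≠ n

/-- A triangle of `G`, as a set of three pairwise adjacent vertices. -/
def IsTriangle {V : Type u} (G : SimpleGraph V) (s : Finset V) : Prop :=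
  s.card = 3 ∧ ∀ x ∈ s, ∀ y ∈ s, x ≠ y → G.Adj x y

/-- Any two (distinct) triangles of `G` are at distance at least `2`. -/
def TrianglesFar {V : Type u} (G : SimpleGraph V) : Prop :=
  ∀ s t : Finset V, IsTriangle G s → IsTriangle G t → s ≠ t →
    ∀ x ∈ s, ∀ y ∈ t, 2 ≤ G.dist x y


lemma WeakReduce.finite' {V : Type u} {G : SimpleGraph V} {S : Set V} {f : V → ℤ}
    (h : WeakReduce G S f) : S.Finite := by
  induction h with
  | nil f => exact Set.finite_empty
  | delete S f u hu h0 hpos ih IH =>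
      exact (IH.insert u).subset (fun x hx => by by_cases hxu : x = u <;> simp [hxu, hx])
  | deleteSave S f a b ha hb hab hfab hpos ih IH =>
      exact (IH.insert a).subset (fun x hx => by by_cases hxa : x = a <;> simp [hxa, hx])

lemma WeakReduce.mono' {V : Type u} {G : SimpleGraph V} {S : Set V} {f : V → ℤ}
    (h : WeakReduce G S f) : ∀ g : V → ℤ, (∀ x ∈ S, f x ≤ g x) → WeakReduce G S g := by
  induction h with
  | nil f => exact fun g _ => .nil g
  | delete S f u hu h0 hpos ih IH =>
      intro g hg
      refine .delete S g u hu (le_trans h0 (hg u hu)) ?_ (IH _ ?_)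
      · intro x hx
        have h1 := hpos x hx
        have h2 := hg x hx.1
        by_cases hadj : G.Adj u x <;> simp [hadj] at * <;> linarith
      · intro x hx
        have h2 := hg x hx.1
        by_cases hadj : G.Adj u x <;> simp [hadj] <;> linarith
  | deleteSave S f a b ha hb hab hfab hpos ih IH =>
      intro g hg
      have hba : b ≠ a := hab.ne'
      have hfb : 0 ≤ f b := by
        have := hpos b ⟨hb, hba⟩
        simp at this; exact this
      by_cases hgab : g b < g a
      · refine .deleteSave S g a b ha hb hab hgab ?_ (IH _ ?_)
        · intro x hx
          have h1 := hpos x hx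
          have h2 := hg x hx.1
          by_cases hc : G.Adj a x ∧ x ≠ b <;> simp [hc] at * <;> linarith
        · intro x hx
          have h2 := hg x hx.1
          by_cases hc : G.Adj a x ∧ x ≠ b <;> simp [hc] <;> linarith
      · push_neg at hgab
        have hgb : f b + 1 ≤ g b := by
          have := hg a ha; linarith
        refine .delete S g a ha (by have := hg a ha; linarith) ?_ (IH _ ?_)
        · intro x hx
          by_cases hxb : x = b
          · subst hxb
            by_cases hadj : G.Adj a x <;> simp [hadj] <;> linarith
          · have h1 := hpos x hx
            have h2 := hg x hx.1
            by_cases hadj : G.Adj a x <;> simp [hadj, hxb] at * <;> linarith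
        · intro x hx
          by_cases hxb : x = b
          · subst hxb
            have hadj : G.Adj a x := hab
            simp [hadj, hba.symm]
            linarith
          · have h2 := hg x hx.1
            by_cases hadj : G.Adj a x <;> simp [hadj, hxb] <;> linarith

lemma weakReduce_of_big {V : Type u} {G : SimpleGraph V} (n : ℕ) :
    ∀ (S : Set V), S.Finite → S.ncard = n → ∀ f : V → ℤ, (∀ x ∈ S, (n : ℤ) ≤ f x) →
      WeakReduce G S f := by
  induction n with
  | zero =>
      intro S hS hcard f _
      have : S = ∅ := (Set.ncard_eq_zero hS).mp hcard
      rw [this]; exact .nil f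
  | succ n IH =>
      intro S hS hcard f hf
      obtain ⟨u, hu⟩ : S.Nonempty := Set.nonempty_of_ncard_ne_zero (by omega)
      have hcard' : (S \ {u}).ncard = n := by
        have := Set.ncard_diff_singleton_of_mem hu
        omega
      have h0 : 0 ≤ f u := le_trans (by positivity) (hf u hu)
      refine .delete S f u hu h0 ?_ (IH _ hS.diff hcard' _ ?_) <;>
      · intro x hx
        have := hf x hx.1
        by_cases hadj : G.Adj u x <;> simp [hadj] <;> push_cast at * <;> linarith

lemma weakReduce_transfer {V : Type u} {G : SimpleGraph V} (H : G.Subgraph)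
    (hH : ∀ x y : H.verts, H.coe.Adj x y ↔ G.Adj ↑x ↑y)
    (v : V) (hv : v ∉ H.verts)
    {T : Set ↥H.verts} {g : ↥H.verts → ℤ} (h : WeakReduce H.coe T g) :
    ∀ f : V → ℤ, (∀ x ∈ T, f ↑x = g x) →
      ((G.neighborSet v ∩ (Subtype.val '' T)).ncard : ℤ) ≤ f v →
      WeakReduce G (insert v (Subtype.val '' T)) f := by
  classical
  have hinj : Function.Injective (Subtype.val : ↥H.verts → V) := Subtype.val_injective
  induction h with
  | nil g =>
      intro f _ hb
      rw [Set.image_empty]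
      have hins : insert v (∅ : Set V) = {v} := by ext; simp
      rw [hins]
      have h0 : 0 ≤ f v := le_trans (by positivity) hb
      refine .delete {v} f v rfl h0 (by simp) ?_
      rw [Set.diff_self]
      exact .nil _
  | delete T g u hu h0 hpos ih IH =>
      intro f hf hb
      have hvu : v ≠ (u : V) := fun hh => hv (hh ▸ u.2)
      have hTfin : T.Finite :=
        ((WeakReduce.finite' ih).insert u).subset
          (fun x hx => by by_cases hxu : x = u <;> simp [hxu, hx])
      have Bfin : (G.neighborSet v ∩ Subtype.val '' T).Finite :=
        Set.Finite.inter_of_right (hTfin.image _) _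
      have himg : Subtype.val '' (T \ {u}) = (Subtype.val '' T) \ {(u : V)} := by
        rw [Set.image_diff hinj, Set.image_singleton]
      have hB : G.neighborSet v ∩ Subtype.val '' (T \ {u})
          = (G.neighborSet v ∩ Subtype.val '' T) \ {(u : V)} := by
        rw [himg]; ext x; simp only [Set.mem_inter_iff, Set.mem_diff]; tauto
      have hkey : ((G.neighborSet v ∩ Subtype.val '' (T \ {u})).ncard : ℤ)
          ≤ f v - (if G.Adj (↑u) v then 1 else 0) := by
        rw [hB]
        by_cases hadj : G.Adj (↑u) v
        · have huB : (u : V) ∈ G.neighborSet v ∩ Subtype.val '' T :=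
            ⟨hadj.symm, ⟨u, hu, rfl⟩⟩
          have h2 := Set.ncard_diff_singleton_add_one huB Bfin
          have h3 : (((G.neighborSet v ∩ Subtype.val '' T) \ {(u : V)}).ncard : ℤ) + 1
              = ((G.neighborSet v ∩ Subtype.val '' T).ncard : ℤ) := by exact_mod_cast h2
          simp only [hadj, if_true]
          linarith
        · have h2 := Set.ncard_le_ncard (Set.diff_subset
            (s := G.neighborSet v ∩ Subtype.val '' T) (t := {(u : V)})) Bfin
          have h3 : (((G.neighborSet v ∩ Subtype.val '' T) \ {(u : V)}).ncard : ℤ)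
              ≤ ((G.neighborSet v ∩ Subtype.val '' T).ncard : ℤ) := by exact_mod_cast h2
          simp only [hadj, if_false]
          linarith
      refine .delete _ f (↑u) (Set.mem_insert_iff.mpr (Or.inr ⟨u, hu, rfl⟩))
        (by rw [hf u hu]; exact h0) ?_ ?_
      · rintro x ⟨hx1, hx2⟩
        rcases Set.mem_insert_iff.mp hx1 with rfl | ⟨x', hx', rfl⟩
        · have hnn : (0 : ℤ) ≤ ((G.neighborSet x ∩ Subtype.val '' (T \ {u})).ncard : ℤ) := by
            positivity
          linarith
        · have hx'u : x' ≠ u := fun hh => hx2 (by rw [hh]; exact rfl)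
          have h1 := hpos x' ⟨hx', hx'u⟩
          by_cases hc : H.coe.Adj u x'
          · have hcG : G.Adj (↑u) (↑x') := (hH u x').mp hc
            simp only [hc, if_true] at h1
            simp only [hcG, if_true]
            rw [hf x' hx']; linarith
          · have hcG : ¬ G.Adj (↑u) (↑x') := fun hh => hc ((hH u x').mpr hh)
            simp only [hc, if_false] at h1
            simp only [hcG, if_false]
            rw [hf x' hx']; linarith
      · have hset : insert v (Subtype.val '' T) \ {(u : V)}
            = insert v (Subtype.val '' (T \ {u})) := by
          rw [himg, Set.insert_diff_of_notMem _ (by simpa using hvu)]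
        rw [hset]
        refine IH _ ?_ hkey
        intro x' hx'
        show f ↑x' - _ = g x' - _
        rw [hf x' hx'.1]
        by_cases hc : H.coe.Adj u x'
        · have hcG : G.Adj (↑u) (↑x') := (hH u x').mp hc
          simp only [hc, hcG, if_true]
        · have hcG : ¬ G.Adj (↑u) (↑x') := fun hh => hc ((hH u x').mpr hh)
          simp only [hc, hcG, if_false]
  | deleteSave T g a b ha hb hab hfab hpos ih IH =>
      intro f hf hb2
      have hva : v ≠ (a : V) := fun hh => hv (hh ▸ a.2)
      have hvb : v ≠ (b : V) := fun hh => hv (hh ▸ b.2)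
      have hTfin : T.Finite :=
        ((WeakReduce.finite' ih).insert a).subset
          (fun x hx => by by_cases hxa : x = a <;> simp [hxa, hx])
      have Bfin : (G.neighborSet v ∩ Subtype.val '' T).Finite :=
        Set.Finite.inter_of_right (hTfin.image _) _
      have himg : Subtype.val '' (T \ {a}) = (Subtype.val '' T) \ {(a : V)} := by
        rw [Set.image_diff hinj, Set.image_singleton]
      have hB : G.neighborSet v ∩ Subtype.val '' (T \ {a})
          = (G.neighborSet v ∩ Subtype.val '' T) \ {(a : V)} := by
        rw [himg]; ext x; simp only [Set.mem_inter_iff, Set.mem_diff]; tauto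
      have hkey : ((G.neighborSet v ∩ Subtype.val '' (T \ {a})).ncard : ℤ)
          ≤ f v - (if G.Adj (↑a) v ∧ v ≠ (b : V) then 1 else 0) := by
        rw [hB]
        by_cases hadj : G.Adj (↑a) v
        · have haB : (a : V) ∈ G.neighborSet v ∩ Subtype.val '' T :=
            ⟨hadj.symm, ⟨a, ha, rfl⟩⟩
          have h2 := Set.ncard_diff_singleton_add_one haB Bfin
          have h3 : (((G.neighborSet v ∩ Subtype.val '' T) \ {(a : V)}).ncard : ℤ) + 1
              = ((G.neighborSet v ∩ Subtype.val '' T).ncard : ℤ) := by exact_mod_cast h2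
          rw [if_pos ⟨hadj, hvb⟩]
          linarith
        · have h2 := Set.ncard_le_ncard (Set.diff_subset
            (s := G.neighborSet v ∩ Subtype.val '' T) (t := {(a : V)})) Bfin
          have h3 : (((G.neighborSet v ∩ Subtype.val '' T) \ {(a : V)}).ncard : ℤ)
              ≤ ((G.neighborSet v ∩ Subtype.val '' T).ncard : ℤ) := by exact_mod_cast h2
          rw [if_neg (fun hh => hadj hh.1)]
          linarith
      have hcond : ∀ x' : ↥H.verts,
          (G.Adj (↑a) (↑x') ∧ (x' : V) ≠ (b : V)) ↔ (H.coe.Adj a x' ∧ x' ≠ b) := by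
        intro x'
        constructor
        · rintro ⟨h1', h2'⟩
          refine ⟨(hH a x').mpr h1', fun hh => h2' (congrArg Subtype.val hh)⟩
        · rintro ⟨h1', h2'⟩
          refine ⟨(hH a x').mp h1', fun hh => h2' (hinj hh)⟩
      refine .deleteSave _ f (↑a) (↑b) (Set.mem_insert_iff.mpr (Or.inr ⟨a, ha, rfl⟩))
        (Set.mem_insert_iff.mpr (Or.inr ⟨b, hb, rfl⟩))
        ((hH a b).mp hab) (by rw [hf a ha, hf b hb]; exact hfab) ?_ ?_
      · rintro x ⟨hx1, hx2⟩
        rcases Set.mem_insert_iff.mp hx1 with rfl | ⟨x', hx', rfl⟩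
        · have hnn : (0 : ℤ) ≤ ((G.neighborSet x ∩ Subtype.val '' (T \ {a})).ncard : ℤ) := by
            positivity
          linarith
        · have hx'a : x' ≠ a := fun hh => hx2 (by rw [hh]; exact rfl)
          have h1 := hpos x' ⟨hx', hx'a⟩
          by_cases hc : H.coe.Adj a x' ∧ x' ≠ b
          · have hcG : G.Adj (↑a) (↑x') ∧ (x' : V) ≠ (b : V) := (hcond x').mpr hc
            rw [if_pos hc] at h1
            rw [if_pos hcG, hf x' hx']; linarith
          · have hcG : ¬ (G.Adj (↑a) (↑x') ∧ (x' : V) ≠ (b : V)) :=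
              fun hh => hc ((hcond x').mp hh)
            rw [if_neg hc] at h1
            rw [if_neg hcG, hf x' hx']; linarith
      · have hset : insert v (Subtype.val '' T) \ {(a : V)}
            = insert v (Subtype.val '' (T \ {a})) := by
          rw [himg, Set.insert_diff_of_notMem _ (by simpa using hva)]
        rw [hset]
        refine IH _ ?_ hkey
        intro x' hx'
        show f ↑x' - _ = g x' - _
        rw [hf x' hx'.1]
        by_cases hc : H.coe.Adj a x' ∧ x' ≠ b
        · have hcG : G.Adj (↑a) (↑x') ∧ (x' : V) ≠ (b : V) := (hcond x').mpr hc
          rw [if_pos hc, if_pos hcG]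
        · have hcG : ¬ (G.Adj (↑a) (↑x') ∧ (x' : V) ≠ (b : V)) :=
            fun hh => hc ((hcond x').mp hh)
          rw [if_neg hc, if_neg hcG]

/-- if `wd(G) = d ≥ 3` and `wd(G*) < d` for every proper subgraph `G*` of `G`,
then every vertex of `G` has degree at least `d`. -/
theorem stmt10 {V : Type u} (G : SimpleGraph V) (d : ℕ) (hd : 3 ≤ d)
    (h1 : weakDegeneracy G = d)
    (h2 : ∀ H : G.Subgraph, H ≠ ⊤ → weakDegeneracy H.coe < d) :
    ∀ v : V, d ≤ (G.neighborSet v).ncard := by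
  intro v
  by_contra hlt
  push_neg at hlt
  have hne : {k | WeaklyDegenerate G k}.Nonempty := by
    by_contra hcon
    rw [Set.not_nonempty_iff_eq_empty] at hcon
    rw [weakDegeneracy, hcon, Nat.sInf_empty] at h1
    omega
  have hmem : WeaklyDegenerate G d := by
    have := Nat.sInf_mem hne
    rwa [show sInf {k | WeaklyDegenerate G k} = d from h1] at this
  have hVfin : (Set.univ : Set V).Finite := WeakReduce.finite' hmem
  haveI : Finite V := Set.finite_univ_iff.mp hVfin
  set H : G.Subgraph := (⊤ : G.Subgraph).deleteVerts {v} with hHdef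
  have hvH : v ∉ H.verts := by simp [hHdef]
  have hHne : H ≠ ⊤ := by
    intro hh
    apply hvH
    rw [hh]
    simp
  have hHadj : ∀ x y : ↥H.verts, H.coe.Adj x y ↔ G.Adj ↑x ↑y := by
    intro x y
    have hx := x.2
    have hy := y.2
    simp only [hHdef, SimpleGraph.Subgraph.deleteVerts_verts, SimpleGraph.Subgraph.verts_top,
      Set.mem_diff, Set.mem_singleton_iff] at hx hy
    constructor
    · intro hh
      rw [SimpleGraph.Subgraph.coe_adj] at hh
      exact hh.adj_sub
    · intro hh
      simp only [SimpleGraph.Subgraph.coe_adj, hHdef, SimpleGraph.Subgraph.deleteVerts_adj]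
      refine ⟨trivial, hx.2, trivial, hy.2, hh⟩
  have hKne : {k | WeaklyDegenerate H.coe k}.Nonempty := by
    refine ⟨(Set.univ : Set ↥H.verts).ncard, ?_⟩
    exact weakReduce_of_big _ _ Set.finite_univ rfl _ (fun x _ => le_refl _)
  have hk : WeaklyDegenerate H.coe (weakDegeneracy H.coe) := Nat.sInf_mem hKne
  have hkd : weakDegeneracy H.coe < d := h2 H hHne
  have hred : WeakReduce H.coe Set.univ (fun _ => (d : ℤ) - 1) := by
    refine WeakReduce.mono' hk _ ?_
    intro x _
    have hlt' : (weakDegeneracy H.coe : ℤ) < (d : ℤ) := by exact_mod_cast hkd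
    omega
  have himg : Subtype.val '' (Set.univ : Set ↥H.verts) = H.verts := by
    rw [Set.image_univ, Subtype.range_coe]
  have hNv : G.neighborSet v ∩ Subtype.val '' (Set.univ : Set ↥H.verts) = G.neighborSet v := by
    rw [himg]
    ext x
    simp only [hHdef, SimpleGraph.Subgraph.deleteVerts_verts, SimpleGraph.Subgraph.verts_top,
      Set.mem_inter_iff, Set.mem_diff, Set.mem_singleton_iff, SimpleGraph.mem_neighborSet]
    constructor
    · tauto
    · intro hh
      exact ⟨hh, trivial, fun hxv => (hxv ▸ hh).ne' rfl⟩
  have hmain : WeakReduce G (insert v (Subtype.val '' (Set.univ : Set ↥H.verts)))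
      (fun _ => (d : ℤ) - 1) := by
    refine weakReduce_transfer H hHadj v hvH hred _ (fun x _ => rfl) ?_
    rw [hNv]
    omega
  have hins : insert v (Subtype.val '' (Set.univ : Set ↥H.verts)) = (Set.univ : Set V) := by
    rw [himg]
    ext x
    simp only [hHdef, SimpleGraph.Subgraph.deleteVerts_verts, SimpleGraph.Subgraph.verts_top,
      Set.mem_insert_iff, Set.mem_diff, Set.mem_singleton_iff, Set.mem_univ, iff_true]
    by_cases hx : x = v
    · left; exact hx
    · right; exact ⟨trivial, hx⟩
  rw [hins] at hmain
  have hwd : WeaklyDegenerate G (d - 1) := by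
    unfold WeaklyDegenerate WeaklyFDegenerate
    have : (fun _ : V => ((d - 1 : ℕ) : ℤ)) = (fun _ : V => (d : ℤ) - 1) := by
      funext x
      push_cast [Nat.cast_sub (by omega : 1 ≤ d)]
      ring
    rw [this]
    exact hmain
  have : weakDegeneracy G ≤ d - 1 := Nat.sInf_le hwd
  omega
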